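/- Let Γ ⊂ ℝⁿ be an open convex symmetric cone containing the positive orthant, and f : Γ → (0,∞) a concave symmetric function that is strictly increasing in each variable. Define f_{∞,n}(λ) = lim_{R→∞} f(λ₁,…,λ_{n−1},R) ∈ (0,∞]. Then either f_{∞,n}(λ) = ∞ for all λ ∈ Γ, or f_{∞,n}(λ) < ∞ for all λ ∈ Γ. -/

import Mathlib

open Filter

/-- dichotomy for `f_{∞,n}`: either the limit as the last coordinate
tends to `∞` is `∞` for all `λ ∈ Γ`, or it is finite for all `λ ∈ Γ`. -/
theorem stmt_1 {n : ℕ} (Γ : Set (Fin (n + 1) → ℝ)) (f : (Fin (n + 1) → ℝ) → ℝ)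
    (hΓopen : IsOpen Γ) (hΓconv : Convex ℝ Γ)
    (hΓcone : ∀ c : ℝ, 0 < c → ∀ x ∈ Γ, c • x ∈ Γ)
    (hΓsym : ∀ σ : Equiv.Perm (Fin (n + 1)), ∀ x ∈ Γ, x ∘ σ ∈ Γ)
    (hΓpos : {x : Fin (n + 1) → ℝ | ∀ i, 0 < x i} ⊆ Γ)
    (hfpos : ∀ x ∈ Γ, 0 < f x)
    (hfconc : ConcaveOn ℝ Γ f)
    (hfsym : ∀ σ : Equiv.Perm (Fin (n + 1)), ∀ x ∈ Γ, f (x ∘ σ) = f x)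
    (hfmono : ∀ x ∈ Γ, ∀ i : Fin (n + 1), ∀ R : ℝ, x i < R →
      f x < f (Function.update x i R)) :
    (∀ x ∈ Γ, Tendsto (fun R : ℝ => f (Function.update x (Fin.last n) R)) atTop atTop) ∨
    (∀ x ∈ Γ, ∃ L : ℝ, 0 < L ∧
      Tendsto (fun R : ℝ => f (Function.update x (Fin.last n) R)) atTop (nhds L)) := by
  classical
  set l := Fin.last n with hl
  -- Γ is closed under addition
  have hadd : ∀ a ∈ Γ, ∀ b ∈ Γ, a + b ∈ Γ := by
    intro a ha b hb
    have hmid : (1/2 : ℝ) • a + (1/2 : ℝ) • b ∈ Γ :=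
      hΓconv ha hb (by norm_num) (by norm_num) (by norm_num)
    have h2 := hΓcone 2 (by norm_num) _ hmid
    have : (2:ℝ) • ((1/2 : ℝ) • a + (1/2 : ℝ) • b) = a + b := by
      funext i; simp [Pi.smul_apply]; ring
    rwa [this] at h2
  -- membership when raising last coordinate
  have hmem : ∀ x ∈ Γ, ∀ R : ℝ, x l ≤ R → Function.update x l R ∈ Γ := by
    intro x hx R hR
    rcases eq_or_lt_of_le hR with h | h
    · rw [← h, Function.update_eq_self]; exact hx
    · obtain ⟨ε, hε, hball⟩ := Metric.isOpen_iff.1 hΓopen x hx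
      set t := R - x l with ht
      have htpos : 0 < t := sub_pos.2 h
      set c := ε / 2 with hc
      have hcpos : 0 < c := by positivity
      set δ := c / t with hδ
      have hδpos : 0 < δ := by positivity
      have h1 : x - c • (fun _ => (1:ℝ)) ∈ Γ := by
        apply hball
        rw [Metric.mem_ball, dist_pi_lt_iff hε]
        intro i
        simp only [Pi.sub_apply, Pi.smul_apply, smul_eq_mul, mul_one, Real.dist_eq]
        have hxi : x i - c - x i = -c := by ring
        rw [hxi, abs_neg, abs_of_pos hcpos, hc]
        linarith
      have h2 : t • (Function.update (fun _ : Fin (n+1) => δ) l (1 + δ)) ∈ Γ := by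
        apply hΓcone t htpos
        apply hΓpos
        intro i
        rcases eq_or_ne i l with hi | hi
        · rw [hi, Function.update_self]; positivity
        · rw [Function.update_of_ne hi]; exact hδpos
      have heq : Function.update x l R
          = (x - c • (fun _ => (1:ℝ))) + t • (Function.update (fun _ : Fin (n+1) => δ) l (1 + δ)) := by
        funext i
        by_cases hi : i = l
        · subst hi
          simp [Function.update_self, hδ]
          field_simp
          ring
        · simp [Function.update_of_ne hi, hδ]
          field_simp
          ring
      rw [heq]
      exact hadd _ h1 _ h2
  -- monotonicity of the slice function
  have hmono : ∀ x ∈ Γ, MonotoneOn (fun R => f (Function.update x l R)) (Set.Ici (x l)) := by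
    intro x hx R1 h1 R2 _ h12
    rcases lt_or_eq_of_le h12 with hlt | hEq
    · have hm := hfmono (Function.update x l R1) (hmem x hx R1 h1) l R2
        (by simpa [Function.update_self] using hlt)
      rw [Function.update_idem] at hm
      exact le_of_lt hm
    · rw [hEq]
  by_cases hP : ∃ x ∈ Γ, ∃ B : ℝ, ∀ R, x l ≤ R → f (Function.update x l R) ≤ B
  · right
    obtain ⟨x, hx, B, hB⟩ := hP
    intro y hy
    -- choose small ε with z := x + ε • (x - y) ∈ Γ
    have hcont : Tendsto (fun t : ℝ => x + t • (x - y)) (nhds 0) (nhds x) := by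
      have hc : Continuous fun t : ℝ => x + t • (x - y) := by continuity
      simpa using hc.tendsto 0
    have hev : ∀ᶠ t in nhdsWithin (0:ℝ) (Set.Ioi 0), x + t • (x - y) ∈ Γ :=
      (hcont.eventually (hΓopen.mem_nhds hx)).filter_mono nhdsWithin_le_nhds
    obtain ⟨ε, hzΓ, hεpos⟩ := (hev.and self_mem_nhdsWithin).exists
    set z := x + ε • (x - y) with hz
    have h1ε : (0:ℝ) < 1 + ε := by linarith
    set a := (1+ε)⁻¹ with ha
    set b' := ε/(1+ε) with hb'
    have hapos : 0 < a := by positivity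
    have hb'pos : 0 < b' := by positivity
    have hab : a + b' = 1 := by rw [ha, hb']; field_simp
    have hkey : ∀ R₂ : ℝ, a • z + b' • Function.update y l R₂
        = Function.update x l (a * z l + b' * R₂) := by
      intro R₂
      funext i
      by_cases hi : i = l
      · subst hi; simp [Function.update_self]
      · simp only [Pi.add_apply, Pi.smul_apply, smul_eq_mul,
          Function.update_of_ne hi, hz, Pi.sub_apply, ha, hb']
        field_simp
        ring
    set C := (B - a * f z) / b' with hC
    set R₀ := max (y l) ((x l - a * z l) / b') with hR₀
    have hCbound : ∀ S, R₀ ≤ S → f (Function.update y l S) ≤ C := by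
      intro S hS
      have hS1 : y l ≤ S := le_trans (le_max_left _ _) hS
      have hS2 : (x l - a * z l) / b' ≤ S := le_trans (le_max_right _ _) hS
      have hR : x l ≤ a * z l + b' * S := by
        have := (div_le_iff₀ hb'pos).1 hS2
        nlinarith
      have hcon := hfconc.2 hzΓ (hmem y hy S hS1) (le_of_lt hapos) (le_of_lt hb'pos) hab
      rw [hkey S] at hcon
      have hBB := hB _ hR
      rw [smul_eq_mul, smul_eq_mul] at hcon
      rw [hC, le_div_iff₀ hb'pos]
      nlinarith
    set g := fun R : ℝ => f (Function.update y l R) with hg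
    set cc := y l with hcc
    set hfun := fun R : ℝ => g (max R cc) with hhfun
    have hmonoy := hmono y hy
    have hmonoh : Monotone hfun := by
      intro R1 R2 h12
      exact hmonoy (Set.mem_Ici.2 (le_max_right R1 cc)) (Set.mem_Ici.2 (le_max_right R2 cc))
        (max_le_max h12 le_rfl)
    have hbdd : BddAbove (Set.range hfun) := by
      refine ⟨C, ?_⟩
      rintro _ ⟨R, rfl⟩
      have hmem1 : max R cc ∈ Set.Ici cc := Set.mem_Ici.2 (le_max_right _ _)
      have hmem2 : max (max R cc) R₀ ∈ Set.Ici cc :=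
        Set.mem_Ici.2 (le_trans (le_max_right R cc) (le_max_left _ _))
      calc hfun R ≤ g (max (max R cc) R₀) := hmonoy hmem1 hmem2 (le_max_left _ _)
        _ ≤ C := hCbound _ (le_max_right _ _)
    have htend := tendsto_atTop_ciSup hmonoh hbdd
    have heq : g =ᶠ[atTop] hfun := by
      filter_upwards [eventually_ge_atTop cc] with R hR
      simp [hhfun, max_eq_left hR]
    refine ⟨⨆ R, hfun R, ?_, htend.congr' heq.symm⟩
    have hle : hfun cc ≤ ⨆ R, hfun R := le_ciSup hbdd cc
    have : hfun cc = f y := by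
      simp [hhfun, hg, hcc, Function.update_eq_self]
    rw [this] at hle
    exact lt_of_lt_of_le (hfpos y hy) hle
  · left
    push_neg at hP
    intro x hx
    rw [tendsto_atTop]
    intro b
    obtain ⟨R₀, hR₀, hgt⟩ := hP x hx b
    filter_upwards [eventually_ge_atTop R₀] with R hR
    exact le_of_lt (lt_of_lt_of_le hgt
      (hmono x hx (Set.mem_Ici.2 hR₀) (Set.mem_Ici.2 (le_trans hR₀ hR)) hR))
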